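/- Let M >= 2 be an integer. Then for every integer C with 0 <= C <= M-1, f_contain(C) * f_intersect(M-1-C) >= 1/e, where e is Euler's number. In particular, (1 - 1/M)^{M-1} >= 1/e. -/

import Mathlib

/-- `f_contain(C) = (1 - 1/M)^C`. -/
noncomputable def fContain (M C : ℕ) : ℝ := (1 - 1 / (M : ℝ)) ^ C

/-- `f_intersect(C) = (∑_{i=0}^{2C} (1 - 1/M)^i) / (2C + 1)`. -/
noncomputable def fIntersect (M C : ℕ) : ℝ :=
  (∑ i ∈ Finset.range (2 * C + 1), (1 - 1 / (M : ℝ)) ^ i) / (2 * C + 1)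

private lemma pair_ge (q : ℝ) (hq : 0 ≤ q) {i D : ℕ} (hi : i ≤ D) :
    2 * q ^ D ≤ q ^ i + q ^ (2 * D - i) := by
  have h1 : 2 * D - i = i + (D - i) + (D - i) := by omega
  have h2 : D = i + (D - i) := by omega
  rw [h1]
  nth_rewrite 1 [h2]
  rw [pow_add, pow_add, pow_add]
  have ha : 0 ≤ q ^ i := pow_nonneg hq i
  have hb : 0 ≤ q ^ (D - i) := pow_nonneg hq _
  nlinarith [mul_nonneg ha (sq_nonneg (1 - q ^ (D - i)))]

private lemma pair_ge' (q : ℝ) (hq : 0 ≤ q) {i D : ℕ} (hi : i ≤ 2 * D) :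
    2 * q ^ D ≤ q ^ i + q ^ (2 * D - i) := by
  rcases le_or_gt i D with h | h
  · exact pair_ge q hq h
  · have h2 : 2 * D - i ≤ D := by omega
    have := pair_ge q hq h2
    have h3 : 2 * D - (2 * D - i) = i := by omega
    rw [h3] at this
    linarith

private lemma sum_ge (q : ℝ) (hq : 0 ≤ q) (D : ℕ) :
    (2 * D + 1 : ℝ) * q ^ D ≤ ∑ i ∈ Finset.range (2 * D + 1), q ^ i := by
  have hrefl : ∑ i ∈ Finset.range (2 * D + 1), q ^ i
      = ∑ i ∈ Finset.range (2 * D + 1), q ^ (2 * D - i) := by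
    have := Finset.sum_range_reflect (fun i => q ^ i) (2 * D + 1)
    simpa using this.symm
  have key : (2 * D + 1 : ℝ) * (2 * q ^ D)
      ≤ ∑ i ∈ Finset.range (2 * D + 1), (q ^ i + q ^ (2 * D - i)) := by
    have := Finset.card_nsmul_le_sum (Finset.range (2 * D + 1))
      (fun i => q ^ i + q ^ (2 * D - i)) (2 * q ^ D)
      (fun i hi => pair_ge' q hq (by simp only [Finset.mem_range] at hi; omega))
    simpa [nsmul_eq_mul, mul_comm] using this
  rw [Finset.sum_add_distrib, ← hrefl] at key
  linarith

private lemma key_exp (M : ℕ) (hM : 2 ≤ M) :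
    1 / Real.exp 1 ≤ (1 - 1 / (M : ℝ)) ^ (M - 1) := by
  set n : ℕ := M - 1 with hn
  have hM' : (M : ℝ) = (n : ℝ) + 1 := by
    rw [hn, Nat.cast_sub (by omega : 1 ≤ M), Nat.cast_one]; ring
  have hn1 : (1 : ℝ) ≤ (n : ℝ) := by
    have : 1 ≤ n := by omega
    exact_mod_cast this
  have hnpos : (0 : ℝ) < n := by linarith
  have hq : Real.exp (-(1 / (n : ℝ))) ≤ 1 - 1 / (M : ℝ) := by
    have h1 : (n : ℝ) / ((n : ℝ) + 1) = 1 - 1 / (M : ℝ) := by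
      rw [hM']; field_simp; ring
    rw [← h1]
    have h2 : ((n : ℝ) + 1) / (n : ℝ) ≤ Real.exp (1 / (n : ℝ)) := by
      have := Real.add_one_le_exp (1 / (n : ℝ))
      have : 1 + 1 / (n : ℝ) ≤ Real.exp (1 / (n : ℝ)) := by linarith
      calc ((n : ℝ) + 1) / (n : ℝ) = 1 + 1 / (n : ℝ) := by field_simp
        _ ≤ _ := this
    rw [Real.exp_neg]
    rw [inv_le_comm₀ (Real.exp_pos _) (by positivity)]
    calc ((n : ℝ) / ((n : ℝ) + 1))⁻¹ = ((n : ℝ) + 1) / (n : ℝ) := by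
          rw [inv_div]
      _ ≤ Real.exp (1 / (n : ℝ)) := h2
  have hpow : Real.exp (-(1 / (n : ℝ))) ^ n ≤ (1 - 1 / (M : ℝ)) ^ n :=
    pow_le_pow_left₀ (Real.exp_nonneg _) hq n
  have heq : Real.exp (-(1 / (n : ℝ))) ^ n = Real.exp (-1) := by
    rw [← Real.exp_nat_mul]
    congr 1
    field_simp
  rw [heq] at hpow
  rw [Real.exp_neg] at hpow
  rw [one_div]
  exact hpow

/-- for `M ≥ 2` and `0 ≤ C ≤ M - 1`,
`f_contain(C) * f_intersect(M-1-C) ≥ 1/e`; in particular `(1 - 1/M)^{M-1} ≥ 1/e`. -/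
theorem stmt7 (M : ℕ) (hM : 2 ≤ M) (C : ℕ) (hC : C ≤ M - 1) :
    1 / Real.exp 1 ≤ fContain M C * fIntersect M (M - 1 - C) ∧
    1 / Real.exp 1 ≤ (1 - 1 / (M : ℝ)) ^ (M - 1) := by
  have hkey := key_exp M hM
  refine ⟨?_, hkey⟩
  set q : ℝ := 1 - 1 / (M : ℝ) with hqdef
  have hq0 : 0 ≤ q := by
    have h1 : (2 : ℝ) ≤ (M : ℝ) := by exact_mod_cast hM
    have : 1 / (M : ℝ) ≤ 1 / 2 := by
      apply one_div_le_one_div_of_le <;> linarith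
    rw [hqdef]; linarith
  set D : ℕ := M - 1 - C with hD
  have hsum := sum_ge q hq0 D
  have hpos : (0 : ℝ) < 2 * D + 1 := by positivity
  have hIq : q ^ D ≤ fIntersect M D := by
    rw [fIntersect, le_div_iff₀ hpos]
    have : ((2 * D + 1 : ℕ) : ℝ) = 2 * (D : ℝ) + 1 := by push_cast; ring
    calc q ^ D * (2 * (D : ℝ) + 1) = (2 * (D : ℝ) + 1) * q ^ D := by ring
      _ ≤ _ := hsum
  have hCq : fContain M C = q ^ C := rfl
  have hqC : 0 ≤ q ^ C := pow_nonneg hq0 C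
  calc 1 / Real.exp 1 ≤ q ^ (M - 1) := hkey
    _ = q ^ C * q ^ D := by rw [← pow_add]; congr 1; omega
    _ ≤ fContain M C * fIntersect M D := by
        rw [hCq]; exact mul_le_mul_of_nonneg_left hIq hqC
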